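/- Attaching fragments preserves the HD property at the root: let H be a hypergraph, λ_r ⊆ E(H) with |λ_r| ≤ k, let χ_r = ⋃λ_r, and let C₁,…,C_ℓ be the [χ_r]-components of (E(H), ∅, ∅). If for every i the extended subhypergraph (C_i, ∅, V(C_i) ∩ χ_r) admits an HD D_i of width ≤ k, then H admits an HD of width ≤ k, namely the tree with root r labelled (χ_r, λ_r) whose children are the roots of the D_i. -/

import Mathlib

open scoped Classical

/-- A hypergraph: a finite set of nonempty hyperedges over vertex type `V`. -/
structure HGraph (V : Type) [DecidableEq V] where
  edges : Finset (Finset V)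
  edge_nonempty : ∀ e ∈ edges, e.Nonempty

/-- The vertex set of a hypergraph: the union of its edges. -/
noncomputable def HGraph.verts {V : Type} [DecidableEq V] (H : HGraph V) :
    Finset V := H.edges.sup id

/-- An extended subhypergraph `(E', Sp, Con)` of a hypergraph `H`. -/
structure ExtSubHG {V : Type} [DecidableEq V] (H : HGraph V) where
  E : Finset (Finset V)
  Sp : Finset (Finset V)
  Con : Finset V
  E_subset : E ⊆ H.edges
  Sp_subset : ∀ s ∈ Sp, s ⊆ H.verts
  Con_subset : Con ⊆ H.verts

/-- The vertices of an extended subhypergraph: `V(H') = ⋃E' ∪ ⋃Sp`. -/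
noncomputable def ExtSubHG.verts {V : Type} [DecidableEq V] {H : HGraph V}
    (H' : ExtSubHG H) : Finset V := (H'.E ∪ H'.Sp).sup id

/-- A finite rooted tree, given by a parent function from which the root is reachable. -/
structure RTree (α : Type) where
  root : α
  parent : α → α
  parent_root : parent root = root
  reaches_root : ∀ u, ∃ k, parent^[k] u = root

namespace RTree

variable {α : Type}

/-- `u` is an ancestor of `w` (possibly `u = w`). -/
def isAnc (T : RTree α) (u w : α) : Prop := ∃ k, T.parent^[k] w = u

/-- `u` is a proper ancestor of `w`. -/
def properAnc (T : RTree α) (u w : α) : Prop := T.isAnc u w ∧ u ≠ w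

/-- `c` is a child of `u`. -/
def isChild (T : RTree α) (c u : α) : Prop := T.parent c = u ∧ c ≠ u

/-- The subtree `T_u` rooted at `u`: all descendants of `u` (including `u`). -/
noncomputable def subtree (T : RTree α) [Fintype α] (u : α) : Finset α :=
  Finset.univ.filter (fun w => T.isAnc u w)

/-- The part of the tree strictly above `u`: all nodes outside the subtree `T_u`. -/
noncomputable def outside (T : RTree α) [Fintype α] (u : α) : Finset α :=
  Finset.univ.filter (fun w => ¬ T.isAnc u w)

/-- `x` lies on the (unique) path between `u` and `w` in the tree `T`. -/
def onPath (T : RTree α) (u w x : α) : Prop :=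
  (T.isAnc x u ∨ T.isAnc x w) ∧ ∀ a, T.isAnc a u → T.isAnc a w → T.isAnc a x

/-- A set of nodes is connected in `T` if it is closed under taking paths. -/
def connectedIn (T : RTree α) (S : Set α) : Prop :=
  ∀ u ∈ S, ∀ w ∈ S, ∀ x, T.onPath u w x → x ∈ S

/-- `u` is a leaf of `T`. -/
def isLeaf (T : RTree α) (u : α) : Prop := ∀ c, ¬ T.isChild c u

end RTree

/-- `[U]`-adjacency on a set `F` of (possibly special) edges:
`f` and `g` are adjacent iff they share a vertex outside `U`. -/
def UAdj {V : Type} [DecidableEq V] (F : Finset (Finset V)) (U : Finset V)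
    (f g : Finset V) : Prop :=
  f ∈ F ∧ g ∈ F ∧ ((f ∩ g) \ U).Nonempty

/-- `[U]`-connectedness: the transitive closure of `[U]`-adjacency (note that this
relation is reflexive exactly on the edges `f ∈ F` with `f \ U ≠ ∅`). -/
def UConn {V : Type} [DecidableEq V] (F : Finset (Finset V)) (U : Finset V)
    (f g : Finset V) : Prop :=
  Relation.TransGen (UAdj F U) f g

/-- A `[U]`-component of `F`: a maximally `[U]`-connected subset of `F`. -/
def IsUComponent {V : Type} [DecidableEq V] (F : Finset (Finset V)) (U : Finset V)
    (C : Finset (Finset V)) : Prop :=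
  C ⊆ F ∧ C.Nonempty ∧ (∀ f ∈ C, ∀ g ∈ C, UConn F U f g) ∧
  ∀ C', C ⊂ C' → C' ⊆ F → ∃ f ∈ C', ∃ g ∈ C', ¬ UConn F U f g

/-- Conditions (1)–(6): `(T, χ, lam)` is a hypertree decomposition of the extended
subhypergraph `(E', Sp, Con)` of the hypergraph `H`. -/
structure IsHD {V α : Type} [DecidableEq V] (H : HGraph V)
    (E' Sp : Finset (Finset V)) (Con : Finset V)
    (T : RTree α) (χ : α → Finset V) (lam : α → Finset (Finset V)) : Prop where
  cond1 : ∀ u, (lam u ⊆ H.edges ∧ χ u ⊆ (lam u).sup id) ∨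
    (∃ s ∈ Sp, lam u = {s} ∧ χ u = s)
  cond2E : ∀ f ∈ E', ∃ u, f ⊆ χ u
  cond2Sp : ∀ f ∈ Sp, ∃ u, lam u = {f} ∧ χ u = f
  cond3 : ∀ v ∈ (E' ∪ Sp).sup id, T.connectedIn {u | v ∈ χ u}
  cond4 : ∀ u w, T.isAnc u w → χ w ∩ (lam u).sup id ⊆ χ u
  cond5 : ∀ u, (∃ s ∈ Sp, lam u = {s}) → T.isLeaf u
  cond6 : Con ⊆ χ T.root

/-- A classical hypertree decomposition of a hypergraph `H`
(Gottlob–Leone–Scarcello, conditions (1)–(4)). -/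
structure IsClassicalHD {V α : Type} [DecidableEq V] (H : HGraph V)
    (T : RTree α) (χ : α → Finset V) (lam : α → Finset (Finset V)) : Prop where
  cover : ∀ e ∈ H.edges, ∃ u, e ⊆ χ u
  conn : ∀ v ∈ H.verts, T.connectedIn {u | v ∈ χ u}
  lam_edges : ∀ u, lam u ⊆ H.edges
  chi_sub_lam : ∀ u, χ u ⊆ (lam u).sup id
  special : ∀ u w, T.isAnc u w → χ w ∩ (lam u).sup id ⊆ χ u

/-- `cov(u)`: the (special) edges of `E' ∪ Sp` covered for the first time at node `u`. -/
noncomputable def covAt {V α : Type} [DecidableEq V] (T : RTree α)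
    (χ : α → Finset V) (E' Sp : Finset (Finset V)) (u : α) : Finset (Finset V) :=
  (E' ∪ Sp).filter (fun f => f ⊆ χ u ∧ ∀ u', T.properAnc u' u → ¬ f ⊆ χ u')

/-- `cov(T')` for a set of nodes `T'`. -/
noncomputable def covTree {V α : Type} [DecidableEq V] (T : RTree α)
    (χ : α → Finset V) (E' Sp : Finset (Finset V)) (S : Finset α) :
    Finset (Finset V) :=
  S.biUnion (covAt T χ E' Sp)

/-- Node `u` is a balanced separator of the decomposition `(T, χ)` of `(E', Sp, _)`:
every child subtree covers at most `(|E'| + |Sp|)/2` (special) edges, and the part of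
the tree above `u` covers strictly fewer than `(|E'| + |Sp|)/2` (special) edges. -/
noncomputable def IsBalancedSep {V α : Type} [DecidableEq V] [Fintype α]
    (T : RTree α) (χ : α → Finset V) (E' Sp : Finset (Finset V)) (u : α) : Prop :=
  (∀ c, T.isChild c u →
      2 * (covTree T χ E' Sp (T.subtree c)).card ≤ E'.card + Sp.card) ∧
  2 * (covTree T χ E' Sp (T.outside u)).card < E'.card + Sp.card

/-- The normal form of HDs of extended subhypergraphs (Definition: for every parent `p`
with child `c`, (1) `cov(T_c)` is a `[χ(p)]`-component; (2) some edge of it is covered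
at `c`; (3) `χ(c) = ⋃λ(c) ∩ ⋃cov(T_c)`). -/
noncomputable def IsNormalForm {V α : Type} [DecidableEq V] [Fintype α]
    (E' Sp : Finset (Finset V))
    (T : RTree α) (χ : α → Finset V) (lam : α → Finset (Finset V)) : Prop :=
  ∀ p c, T.isChild c p →
    IsUComponent (E' ∪ Sp) (χ p) (covTree T χ E' Sp (T.subtree c)) ∧
    (∃ f ∈ covTree T χ E' Sp (T.subtree c), f ⊆ χ c) ∧
    χ c = (lam c).sup id ∩ (covTree T χ E' Sp (T.subtree c)).sup id

/-! ### Auxiliary material for Statement 19 -/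

namespace RTree

theorem isAnc_refl' (T : RTree α) (u : α) : T.isAnc u u := ⟨0, rfl⟩

theorem isAnc_root' (T : RTree α) (u : α) : T.isAnc T.root u := T.reaches_root u

theorem eq_root_of_isAnc_root {T : RTree α} {z : α} (h : T.isAnc z T.root) : z = T.root := by
  obtain ⟨k, hk⟩ := h
  rw [Function.iterate_fixed T.parent_root k] at hk
  exact hk.symm

/-- Relabel the nodes of a rooted tree along an equivalence. -/
def relabel {β : Type} (T : RTree α) (e : α ≃ β) : RTree β where
  root := e T.root
  parent := fun b => e (T.parent (e.symm b))
  parent_root := by simp [T.parent_root]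
  reaches_root := by
    have key : ∀ (k : ℕ) (b : β),
        (fun b => e (T.parent (e.symm b)))^[k] b = e (T.parent^[k] (e.symm b)) := by
      intro k
      induction k with
      | zero => intro b; simp
      | succ k ih =>
        intro b
        rw [Function.iterate_succ_apply, Function.iterate_succ_apply, ih]
        simp
    intro b
    obtain ⟨k, hk⟩ := T.reaches_root (e.symm b)
    exact ⟨k, by rw [key, hk]⟩

theorem relabel_iterate {β : Type} (T : RTree α) (e : α ≃ β) (k : ℕ) (b : β) :
    (T.relabel e).parent^[k] b = e (T.parent^[k] (e.symm b)) := by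
  induction k generalizing b with
  | zero => simp
  | succ k ih =>
    rw [Function.iterate_succ_apply, Function.iterate_succ_apply, ih]
    show e (T.parent^[k] (e.symm (e (T.parent (e.symm b))))) = _
    simp

theorem relabel_isAnc {β : Type} (T : RTree α) (e : α ≃ β) (x y : β) :
    (T.relabel e).isAnc x y ↔ T.isAnc (e.symm x) (e.symm y) := by
  constructor
  · rintro ⟨k, hk⟩
    rw [relabel_iterate] at hk
    exact ⟨k, by rw [← hk]; simp⟩
  · rintro ⟨k, hk⟩
    exact ⟨k, by rw [relabel_iterate, hk]; simp [relabel]⟩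

end RTree

theorem IsClassicalHD.relabel {V α β : Type} [DecidableEq V] {H : HGraph V}
    {T : RTree α} {χ : α → Finset V} {lam : α → Finset (Finset V)}
    (h : IsClassicalHD H T χ lam) (e : α ≃ β) :
    IsClassicalHD H (T.relabel e) (χ ∘ e.symm) (lam ∘ e.symm) where
  cover := by
    intro f hf
    obtain ⟨u, hu⟩ := h.cover f hf
    exact ⟨e u, by simpa using hu⟩
  conn := by
    intro v hv u hu w hw x hx
    refine h.conn v hv (e.symm u) hu (e.symm w) hw (e.symm x) ⟨?_, ?_⟩
    · rcases hx.1 with h1 | h1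
      · exact Or.inl ((T.relabel_isAnc e x u).mp h1)
      · exact Or.inr ((T.relabel_isAnc e x w).mp h1)
    · intro a ha hb
      have := hx.2 (e a) ((T.relabel_isAnc e (e a) u).mpr (by simpa using ha))
        ((T.relabel_isAnc e (e a) w).mpr (by simpa using hb))
      rw [T.relabel_isAnc e (e a) x] at this
      simpa using this
  lam_edges := fun u => h.lam_edges (e.symm u)
  chi_sub_lam := fun u => h.chi_sub_lam (e.symm u)
  special := fun u w hanc => h.special (e.symm u) (e.symm w) ((T.relabel_isAnc e u w).mp hanc)

section Attach

variable {κ : Type} {β : κ → Type} (T : ∀ C, RTree (β C))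

/-- The parent function of the tree obtained by attaching a family of trees below a
new common root. -/
noncomputable def attachParent : Option ((C : κ) × β C) → Option ((C : κ) × β C)
  | none => none
  | some ⟨C, u⟩ => if u = (T C).root then none else some ⟨C, (T C).parent u⟩

theorem attachParent_some (C : κ) (u : β C) :
    attachParent T (some ⟨C, u⟩) =
      if u = (T C).root then none else some ⟨C, (T C).parent u⟩ := rfl

theorem attachParent_iterate_none (k : ℕ) : (attachParent T)^[k] none = none :=
  Function.iterate_fixed rfl k

theorem attachParent_iterate_some (k : ℕ) :
    ∀ (C : κ) (a : β C) (y : (C : κ) × β C),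
      (attachParent T)^[k] (some ⟨C, a⟩) = some y → y = ⟨C, (T C).parent^[k] a⟩ := by
  induction k with
  | zero =>
    intro C a y h
    simp only [Function.iterate_zero, id_eq, Option.some.injEq] at h
    simpa using h.symm
  | succ k ih =>
    intro C a y h
    rw [Function.iterate_succ_apply, attachParent_some] at h
    by_cases hr : a = (T C).root
    · rw [if_pos hr, attachParent_iterate_none] at h
      exact absurd h (by simp)
    · rw [if_neg hr] at h
      rw [ih C ((T C).parent a) y h, Function.iterate_succ_apply]

/-- Attach a family of rooted trees below a new common root `none`. -/
noncomputable def attachTree : RTree (Option ((C : κ) × β C)) where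
  root := none
  parent := attachParent T
  parent_root := rfl
  reaches_root := by
    rintro (_ | ⟨C, u⟩)
    · exact ⟨0, rfl⟩
    · obtain ⟨k, hk⟩ := (T C).reaches_root u
      induction k generalizing u with
      | zero =>
        simp only [Function.iterate_zero, id_eq] at hk
        exact ⟨1, by rw [Function.iterate_one, attachParent_some, if_pos hk]⟩
      | succ k ih =>
        by_cases hr : u = (T C).root
        · exact ⟨1, by rw [Function.iterate_one, attachParent_some, if_pos hr]⟩
        · rw [Function.iterate_succ_apply] at hk
          obtain ⟨m, hm⟩ := ih ((T C).parent u) hk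
          refine ⟨m + 1, ?_⟩
          rw [Function.iterate_succ_apply, attachParent_some, if_neg hr]
          exact hm

theorem attachTree_parent : (attachTree T).parent = attachParent T := rfl

theorem attach_isAnc_none (x : Option ((C : κ) × β C)) : (attachTree T).isAnc none x :=
  (attachTree T).reaches_root x

theorem attach_not_isAnc_some_none (y : (C : κ) × β C) :
    ¬ (attachTree T).isAnc (some y) none := by
  rintro ⟨k, hk⟩
  rw [attachTree_parent, attachParent_iterate_none] at hk
  cases hk

theorem attach_isAnc_some_some {C D : κ} {a : β C} {b : β D}
    (h : (attachTree T).isAnc (some ⟨C, a⟩) (some ⟨D, b⟩)) : C = D := by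
  obtain ⟨k, hk⟩ := h
  rw [attachTree_parent] at hk
  have := attachParent_iterate_some T k D b ⟨C, a⟩ hk
  exact (Sigma.mk.inj_iff.mp this).1

theorem attach_isAnc_iff {C : κ} {a b : β C} :
    (attachTree T).isAnc (some ⟨C, a⟩) (some ⟨C, b⟩) ↔ (T C).isAnc a b := by
  constructor
  · rintro ⟨k, hk⟩
    rw [attachTree_parent] at hk
    have h := attachParent_iterate_some T k C b ⟨C, a⟩ hk
    refine ⟨k, ?_⟩
    have := (Sigma.mk.inj_iff.mp h).2
    exact (eq_of_heq this).symm
  · rintro ⟨k, hk⟩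
    induction k generalizing b with
    | zero =>
      simp only [Function.iterate_zero, id_eq] at hk
      subst hk
      exact ⟨0, rfl⟩
    | succ k ih =>
      by_cases hr : b = (T C).root
      · subst hr
        rw [Function.iterate_fixed (T C).parent_root] at hk
        subst hk
        exact ⟨0, rfl⟩
      · rw [Function.iterate_succ_apply] at hk
        obtain ⟨m, hm⟩ := ih hk
        refine ⟨m + 1, ?_⟩
        rw [Function.iterate_succ_apply, attachTree_parent, attachParent_some, if_neg hr]
        exact hm

end Attach

section Components

variable {V : Type} [DecidableEq V] {F : Finset (Finset V)} {U : Finset V}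

theorem UAdj.symm' {f g : Finset V} (h : UAdj F U f g) : UAdj F U g f :=
  ⟨h.2.1, h.1, by rw [Finset.inter_comm]; exact h.2.2⟩

theorem UConn.symm' {f g : Finset V} (h : UConn F U f g) : UConn F U g f := by
  induction h with
  | single h => exact Relation.TransGen.single h.symm'
  | tail _ h ih => exact Relation.TransGen.head h.symm' ih

theorem comp_closed {C : Finset (Finset V)} {f g : Finset V}
    (hC : IsUComponent F U C) (hf : f ∈ C) (hg : g ∈ F) (hconn : UConn F U f g) :
    g ∈ C := by
  by_contra hgC
  obtain ⟨p, hp, q, hq, hpq⟩ := hC.2.2.2 (C ∪ {g})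
    ((Finset.ssubset_iff_of_subset Finset.subset_union_left).mpr
      ⟨g, Finset.mem_union_right _ (Finset.mem_singleton_self g), hgC⟩)
    (Finset.union_subset hC.1 (Finset.singleton_subset_iff.mpr hg))
  apply hpq
  have key : ∀ p ∈ C ∪ {g}, UConn F U f p := by
    intro p hp
    rcases Finset.mem_union.mp hp with h | h
    · exact hC.2.2.1 f hf p h
    · rw [Finset.mem_singleton] at h; subst h; exact hconn
  exact Relation.TransGen.trans (key p hp).symm' (key q hq)

theorem comp_exists {f : Finset V} (hf : f ∈ F) (hne : (f \ U).Nonempty) :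
    ∃ C, IsUComponent F U C ∧ f ∈ C := by
  have hrefl : UConn F U f f :=
    Relation.TransGen.single ⟨hf, hf, by rwa [Finset.inter_self]⟩
  have hfmem : f ∈ F.filter (fun g => UConn F U f g) :=
    Finset.mem_filter.mpr ⟨hf, hrefl⟩
  refine ⟨F.filter (fun g => UConn F U f g), ⟨Finset.filter_subset _ _, ⟨f, hfmem⟩,
    ?_, ?_⟩, hfmem⟩
  · intro g hg h hh
    exact Relation.TransGen.trans ((Finset.mem_filter.mp hg).2).symm'
      (Finset.mem_filter.mp hh).2
  · intro C' hss hsub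
    obtain ⟨g, hg, hgn⟩ := Finset.exists_of_ssubset hss
    exact ⟨f, hss.1 hfmem, g, hg, fun hconn => hgn (Finset.mem_filter.mpr ⟨hsub hg, hconn⟩)⟩

theorem comp_inter_sub {C D : Finset (Finset V)}
    (hC : IsUComponent F U C) (hD : IsUComponent F U D) (hne : C ≠ D) {v : V}
    (hvC : v ∈ C.sup id) (hvD : v ∈ D.sup id) : v ∈ U := by
  by_contra hvU
  obtain ⟨f, hf, hvf⟩ := Finset.mem_sup.mp hvC
  obtain ⟨g, hg, hvg⟩ := Finset.mem_sup.mp hvD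
  have hadj : UAdj F U f g := ⟨hC.1 hf, hD.1 hg,
    ⟨v, Finset.mem_sdiff.mpr ⟨Finset.mem_inter.mpr ⟨hvf, hvg⟩, hvU⟩⟩⟩
  have hfD : f ∈ D := comp_closed hD hg (hC.1 hf) (Relation.TransGen.single hadj.symm')
  have hgC : g ∈ C := comp_closed hC hf (hD.1 hg) (Relation.TransGen.single hadj)
  apply hne
  apply Finset.Subset.antisymm
  · intro h hh
    exact comp_closed hD hfD (hC.1 hh) (hC.2.2.1 f hf h hh)
  · intro h hh
    exact comp_closed hC hgC (hD.1 hh) (hD.2.2.1 g hg h hh)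

end Components

/-- attaching fragments preserves the HD property at the root: if every
`[⋃λ_r]`-component `C` of `(E(H), ∅, ∅)` admits an HD of width `≤ k` of
`(C, ∅, V(C) ∩ ⋃λ_r)`, then `H` admits a (classical) HD of width `≤ k`. -/
theorem attach_fragments_at_root {V : Type} [DecidableEq V]
    (H : HGraph V) (k : ℕ) (hk : 1 ≤ k)
    (lam_r : Finset (Finset V)) (hsub : lam_r ⊆ H.edges) (hcard : lam_r.card ≤ k)
    (hfrag : ∀ C : Finset (Finset V), IsUComponent H.edges (lam_r.sup id) C →
      ∃ (n : ℕ) (T : RTree (Fin n)) (χ : Fin n → Finset V)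
        (lam : Fin n → Finset (Finset V)),
        IsHD H C ∅ (C.sup id ∩ lam_r.sup id) T χ lam ∧ ∀ u, (lam u).card ≤ k) :
    ∃ (n : ℕ) (T : RTree (Fin n)) (χ : Fin n → Finset V)
      (lam : Fin n → Finset (Finset V)),
      IsClassicalHD H T χ lam ∧ ∀ u, (lam u).card ≤ k := by
  classical
  set comps : Finset (Finset (Finset V)) :=
    H.edges.powerset.filter (fun C => IsUComponent H.edges (lam_r.sup id) C) with hcomps
  have hcomp : ∀ C : {x // x ∈ comps}, IsUComponent H.edges (lam_r.sup id) C.1 :=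
    fun C => (Finset.mem_filter.mp C.2).2
  choose n T0 χ0 lam0 hHD hW using fun C : {x // x ∈ comps} => hfrag C.1 (hcomp C)
  set χ1 : ∀ C : {x // x ∈ comps}, Fin (n C) → Finset V :=
    fun C u => χ0 C u ∩ C.1.sup id with hχ1
  set TT : RTree (Option ((C : {x // x ∈ comps}) × Fin (n C))) := attachTree T0 with hTT
  set χ' : Option ((C : {x // x ∈ comps}) × Fin (n C)) → Finset V :=
    fun x => match x with
      | none => lam_r.sup id
      | some y => χ1 y.1 y.2 with hχ'
  set lam' : Option ((C : {x // x ∈ comps}) × Fin (n C)) → Finset (Finset V) :=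
    fun x => match x with
      | none => lam_r
      | some y => lam0 y.1 y.2 with hlam'
  -- basic facts about the fragment decompositions
  have hcond1 : ∀ C u, lam0 C u ⊆ H.edges ∧ χ0 C u ⊆ (lam0 C u).sup id := by
    intro C u
    rcases (hHD C).cond1 u with h | ⟨s, hs, _⟩
    · exact h
    · exact absurd hs (Finset.notMem_empty s)
  have hcond6 : ∀ C : {x // x ∈ comps}, C.1.sup id ∩ lam_r.sup id ⊆ χ1 C (T0 C).root := by
    intro C v hv
    exact Finset.mem_inter.mpr ⟨(hHD C).cond6 hv, (Finset.mem_inter.mp hv).1⟩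
  have hVdisj : ∀ C D : {x // x ∈ comps}, C ≠ D → ∀ v, v ∈ C.1.sup id →
      v ∈ D.1.sup id → v ∈ lam_r.sup id :=
    fun C D hne v hvC hvD =>
      comp_inter_sub (hcomp C) (hcomp D) (fun h => hne (Subtype.ext h)) hvC hvD
  have hconn3 : ∀ (C : {x // x ∈ comps}) v, v ∈ C.1.sup id →
      ∀ a b c : Fin (n C), v ∈ χ1 C a → v ∈ χ1 C b → (T0 C).onPath a b c →
        v ∈ χ1 C c := by
    intro C v hv a b c ha hb hp
    have h3 := (hHD C).cond3 v (by simpa using hv) a (Finset.mem_inter.mp ha).1 b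
      (Finset.mem_inter.mp hb).1 c hp
    exact Finset.mem_inter.mpr ⟨h3, hv⟩
  have hanc_root : ∀ (C : {x // x ∈ comps}) (a : Fin (n C)),
      TT.isAnc (some ⟨C, (T0 C).root⟩) (some ⟨C, a⟩) :=
    fun C a => (attach_isAnc_iff T0).mpr ((T0 C).isAnc_root' a)
  -- the key step for condition (3)
  have key : ∀ (v : V) (u w x : Option ((C : {x // x ∈ comps}) × Fin (n C))),
      v ∈ χ' u → v ∈ χ' w → TT.isAnc x u →
      (∀ z, TT.isAnc z u → TT.isAnc z w → TT.isAnc z x) → v ∈ χ' x := by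
    intro v u w x hu hw hxu hall
    rcases x with _ | ⟨E, c⟩
    · rcases u with _ | ⟨C, a⟩
      · exact hu
      rcases w with _ | ⟨D, b⟩
      · exact hw
      rcases eq_or_ne C D with rfl | hne
      · exact absurd (hall (some ⟨C, (T0 C).root⟩) (hanc_root C a) (hanc_root C b))
          (attach_not_isAnc_some_none T0 _)
      · exact hVdisj C D hne v (Finset.mem_inter.mp hu).2 (Finset.mem_inter.mp hw).2
    · rcases u with _ | ⟨C, a⟩
      · exact absurd hxu (attach_not_isAnc_some_none T0 _)
      obtain rfl : E = C := attach_isAnc_some_some T0 hxu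
      have hca : (T0 E).isAnc c a := (attach_isAnc_iff T0).mp hxu
      have hvE : v ∈ E.1.sup id := (Finset.mem_inter.mp hu).2
      -- find a second node of the decomposition of `E` containing `v`,
      -- such that `c` is on the path from `a` to it
      have step : ∀ b' : Fin (n E), v ∈ χ1 E b' → (T0 E).onPath a b' c → v ∈ χ' (some ⟨E, c⟩) :=
        fun b' hb' hp => hconn3 E v hvE a b' c hu hb' hp
      have hroot_path : (T0 E).onPath a (T0 E).root c := by
        refine ⟨Or.inl hca, ?_⟩
        intro z _ hzr
        rw [RTree.eq_root_of_isAnc_root hzr]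
        exact (T0 E).isAnc_root' c
      rcases w with _ | ⟨D, b⟩
      · exact step (T0 E).root (hcond6 E (Finset.mem_inter.mpr ⟨hvE, hw⟩)) hroot_path
      · rcases eq_or_ne D E with rfl | hne
        · refine step b hw ⟨Or.inl hca, ?_⟩
          intro z hza hzb
          exact (attach_isAnc_iff T0).mp
            (hall (some ⟨D, z⟩) ((attach_isAnc_iff T0).mpr hza)
              ((attach_isAnc_iff T0).mpr hzb))
        · have hvU : v ∈ lam_r.sup id :=
            hVdisj D E hne v (Finset.mem_inter.mp hw).2 hvE
          exact step (T0 E).root (hcond6 E (Finset.mem_inter.mpr ⟨hvE, hvU⟩)) hroot_path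
  have hHDmain : IsClassicalHD H TT χ' lam' := by
    refine ⟨?_, ?_, ?_, ?_, ?_⟩
    · -- cover
      intro f hf
      rcases (f \ lam_r.sup id).eq_empty_or_nonempty with h | h
      · exact ⟨none, Finset.sdiff_eq_empty_iff_subset.mp h⟩
      · obtain ⟨C, hCcomp, hfC⟩ := comp_exists hf h
        have hCm : C ∈ comps := Finset.mem_filter.mpr
          ⟨Finset.mem_powerset.mpr hCcomp.1, hCcomp⟩
        obtain ⟨u, hu⟩ := (hHD ⟨C, hCm⟩).cond2E f hfC
        exact ⟨some ⟨⟨C, hCm⟩, u⟩,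
          Finset.subset_inter hu (Finset.le_sup (f := id) hfC)⟩
    · -- connectedness
      intro v _ u hu w hw x hx
      rcases hx.1 with h | h
      · exact key v u w x hu hw h hx.2
      · exact key v w u x hw hu h (fun z hzw hzu => hx.2 z hzu hzw)
    · -- lam_edges
      rintro (_ | ⟨C, u⟩)
      · exact hsub
      · exact (hcond1 C u).1
    · -- chi_sub_lam
      rintro (_ | ⟨C, u⟩)
      · exact Finset.Subset.refl _
      · exact Finset.inter_subset_left.trans (hcond1 C u).2
    · -- special condition
      intro u w hanc
      rcases u with _ | ⟨C, a⟩
      · exact Finset.inter_subset_right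
      rcases w with _ | ⟨D, b⟩
      · exact absurd hanc (attach_not_isAnc_some_none T0 _)
      · obtain rfl : C = D := attach_isAnc_some_some T0 hanc
        have hab := (attach_isAnc_iff T0).mp hanc
        have h4 := (hHD C).cond4 a b hab
        intro t ht
        have ht' := Finset.mem_inter.mp ht
        have ht1 := Finset.mem_inter.mp ht'.1
        exact Finset.mem_inter.mpr ⟨h4 (Finset.mem_inter.mpr ⟨ht1.1, ht'.2⟩), ht1.2⟩
  have hWmain : ∀ u, (lam' u).card ≤ k := by
    rintro (_ | ⟨C, u⟩)
    · exact hcard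
    · exact hW C u
  -- relabel onto `Fin n`
  let e := Fintype.equivFin (Option ((C : {x // x ∈ comps}) × Fin (n C)))
  exact ⟨_, TT.relabel e, χ' ∘ e.symm, lam' ∘ e.symm, hHDmain.relabel e,
    fun u => hWmain (e.symm u)⟩
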